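/- Let H be a locally compact Hausdorff group with left Haar measure β and modular function δ_H, acting continuously and properly on the right on a locally compact Hausdorff space X; let λ be a positive Radon measure on X and M : X → ℝ_{>0} a continuous function satisfying M(x·η) = δ_H(η)·M(x) for all x ∈ X, η ∈ H. Let ℋ be a complex Hilbert space and π a unitary representation of H on ℋ (a group homomorphism into the unitary operators such that h ↦ π(h)ξ is continuous for each ξ ∈ ℋ). For f ∈ C_c(X) define ⟨f, f⟩(η) = ∫_X conj(f(x)) f(x·η) dλ(x), the section (|f⟩⟩ξ)(x) = ∫_H f(x·η) M(x·η)^{1/2} π(η)ξ dβ(η), and the operator L(u)ξ = ∫_H u(η) δ_H(η)^{1/2} π(η)ξ dβ(η) for u ∈ C_c(H). Then for every f ∈ C_c(X) and ξ ∈ ℋ, ∫_X conj(f(x)) M(x)^{-1/2} (|f⟩⟩ξ)(x) dλ(x) = L(⟨f, f⟩)ξ; that is, ⟨⟨f| ∘ |f⟩⟩ = L(⟨f, f⟩). -/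

import Mathlib

open MeasureTheory MulOpposite

/-- with `H` (left Haar `β`, modular function `δ_H`) acting continuously
and properly on the right on `X`, `λ` a Radon measure on `X`, `M > 0` continuous with
`M(x·η) = δ_H(η) M(x)`, and a unitary representation `π` of `H` on a Hilbert space `E`,
one has `⟨⟨f| ∘ |f⟩⟩ ξ = L(⟨f,f⟩) ξ` for every `f ∈ C_c(X)` and `ξ ∈ E`, where
`⟨f,f⟩(η) = ∫ conj(f(x)) f(x·η) dλ`, `(|f⟩⟩ξ)(x) = ∫ f(x·η) M(x·η)^{1/2} π(η)ξ dβ`,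
`⟨⟨f|ζ = ∫ conj(f(x)) M(x)^{-1/2} ζ(x) dλ` and `L(u)ξ = ∫ u(η) δ_H(η)^{1/2} π(η)ξ dβ`. -/
theorem bra_ket_equals_convolution_operator
    {H X : Type*}
    [Group H] [TopologicalSpace H] [IsTopologicalGroup H]
    [LocallyCompactSpace H] [T2Space H] [MeasurableSpace H] [BorelSpace H]
    [TopologicalSpace X] [LocallyCompactSpace X] [T2Space X]
    [MulAction Hᵐᵒᵖ X] [ContinuousSMul Hᵐᵒᵖ X]
    [MeasurableSpace X] [BorelSpace X]
    (β : Measure H) [β.IsHaarMeasure]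
    (δH : H → ℝ) (hδHpos : ∀ η, 0 < δH η)
    (hδH : ∀ g : H → ℂ, Continuous g → HasCompactSupport g → ∀ c : H,
      ∫ η, g (η * c) ∂β = ((δH c : ℂ))⁻¹ * ∫ η, g η ∂β)
    (hproper : IsProperMap (fun p : X × H => (p.1, op p.2 • p.1)))
    (lam : Measure X) [lam.Regular]
    (M : X → ℝ) (hMpos : ∀ x, 0 < M x) (hMcont : Continuous M)
    (hMmod : ∀ (x : X) (η : H), M (op η • x) = δH η * M x)
    {E : Type*} [NormedAddCommGroup E] [InnerProductSpace ℂ E] [CompleteSpace E]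
    (π : H →* (E ≃ₗᵢ[ℂ] E)) (hπcont : ∀ ξ : E, Continuous fun h : H => π h ξ)
    (f : X → ℂ) (hf : Continuous f) (hfc : HasCompactSupport f) (ξ : E) :
    ∫ x, ((starRingEnd ℂ) (f x) * ((Real.sqrt (M x) : ℂ))⁻¹)
        • (∫ η, (f (op η • x) * (Real.sqrt (M (op η • x)) : ℂ)) • (π η ξ) ∂β) ∂lam
    = ∫ η, ((∫ x, (starRingEnd ℂ) (f x) * f (op η • x) ∂lam)
        * (Real.sqrt (δH η) : ℂ)) • (π η ξ) ∂β := by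
  have hδHnn : ∀ η, (0:ℝ) ≤ δH η := fun η => (hδHpos η).le
  have hsqrt_ne : ∀ x : X, ((Real.sqrt (M x) : ℝ) : ℂ) ≠ 0 := fun x => by
    exact_mod_cast (Real.sqrt_pos.mpr (hMpos x)).ne'
  set g : X → H → E := fun x η =>
    (((starRingEnd ℂ) (f x) * ((Real.sqrt (M x) : ℂ))⁻¹) *
      (f (op η • x) * (Real.sqrt (M (op η • x)) : ℂ))) • (π η ξ) with hg
  have haction : Continuous fun p : X × H => op p.2 • p.1 :=
    ((continuous_op.comp continuous_snd).smul continuous_fst)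
  have hGcont : Continuous (Function.uncurry g) := by
    apply Continuous.smul
    · apply Continuous.mul
      · exact ((hf.comp continuous_fst).star).mul
          ((Complex.continuous_ofReal.comp
            (Real.continuous_sqrt.comp (hMcont.comp continuous_fst))).inv₀
            (fun p => hsqrt_ne p.1))
      · exact (hf.comp haction).mul
          (Complex.continuous_ofReal.comp (Real.continuous_sqrt.comp (hMcont.comp haction)))
    · exact (hπcont ξ).comp continuous_snd
  have hGsupp : HasCompactSupport (Function.uncurry g) := by
    apply HasCompactSupport.intro (hproper.isCompact_preimage (hfc.prod hfc))
    intro p hp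
    have : p.1 ∉ tsupport f ∨ op p.2 • p.1 ∉ tsupport f := by
      by_contra h
      push_neg at h
      exact hp ⟨h.1, h.2⟩
    rcases this with h | h <;>
      simp [Function.uncurry, hg, image_eq_zero_of_notMem_tsupport h]
  have swap := integral_integral_swap_of_hasCompactSupport hGcont hGsupp
    (μ := lam) (ν := β)
  calc ∫ x, ((starRingEnd ℂ) (f x) * ((Real.sqrt (M x) : ℂ))⁻¹)
        • (∫ η, (f (op η • x) * (Real.sqrt (M (op η • x)) : ℂ)) • (π η ξ) ∂β) ∂lam
      = ∫ x, ∫ η, g x η ∂β ∂lam := by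
        congr 1 with x
        rw [← integral_smul]
        congr 1 with η
        rw [hg, smul_smul]
    _ = ∫ η, ∫ x, g x η ∂lam ∂β := swap
    _ = ∫ η, ((∫ x, (starRingEnd ℂ) (f x) * f (op η • x) ∂lam)
        * (Real.sqrt (δH η) : ℂ)) • (π η ξ) ∂β := by
        congr 1 with η
        have scal : ∀ x : X, ((starRingEnd ℂ) (f x) * ((Real.sqrt (M x) : ℂ))⁻¹) *
            (f (op η • x) * (Real.sqrt (M (op η • x)) : ℂ))
            = ((starRingEnd ℂ) (f x) * f (op η • x)) * (Real.sqrt (δH η) : ℂ) := by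
          intro x
          have : Real.sqrt (M (op η • x)) = Real.sqrt (δH η) * Real.sqrt (M x) := by
            rw [hMmod, Real.sqrt_mul (hδHnn η)]
          rw [this]
          push_cast
          field_simp
          rw [div_eq_iff (hsqrt_ne x)]
          ring
        simp only [hg, scal]
        rw [integral_smul_const, integral_mul_const]
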